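/- If G = (V,E) is an undirected connected graph and there is only one team consisting of all agents (the anonymous MAPF setting), then for any set of distinct start vertices and an equal number of distinct target vertices, there exists an assignment of agents to targets and collision-free paths realizing it. In particular, a solution to the TAPF instance exists whenever |V| ≥ number of agents. -/

import Mathlib

open Finset

namespace TAPFaux

variable {V : Type*} [DecidableEq V]

/-- One pebble move: a pebble at `u` slides along an edge to an unoccupied vertex `w ∈ W`. -/
def StepS (G : SimpleGraph V) (W : Finset V) (S S' : Finset V) : Prop :=
  ∃ u w, u ∈ S ∧ w ∈ W ∧ w ∉ S ∧ G.Adj u w ∧ S' = insert w (S.erase u)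

def Reach (G : SimpleGraph V) (W : Finset V) : Finset V → Finset V → Prop :=
  Relation.ReflTransGen (StepS G W)

/-- `W` is connected in `G` via walks staying in `W`. -/
def ConnOn (G : SimpleGraph V) (W : Finset V) : Prop :=
  ∀ u ∈ W, ∀ v ∈ W, ∃ p : G.Walk u v, ∀ x ∈ p.support, x ∈ W

variable {G : SimpleGraph V} {W S S' T : Finset V}

lemma StepS.subset (h : StepS G W S S') (hS : S ⊆ W) : S' ⊆ W := by
  obtain ⟨u, w, hu, hwW, hw, hadj, rfl⟩ := h
  intro x hx
  rcases Finset.mem_insert.1 hx with rfl | hx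
  · exact hwW
  · exact hS (Finset.mem_of_mem_erase hx)

lemma StepS.card (h : StepS G W S S') : S'.card = S.card := by
  obtain ⟨u, w, hu, hwW, hw, hadj, rfl⟩ := h
  rw [Finset.card_insert_of_notMem (fun hc => hw (Finset.mem_of_mem_erase hc)),
    Finset.card_erase_of_mem hu]
  have : 1 ≤ S.card := Finset.card_pos.2 ⟨u, hu⟩
  omega

lemma Reach.subset (h : Reach G W S T) (hS : S ⊆ W) : T ⊆ W := by
  induction h with
  | refl => exact hS
  | tail _ hstep ih => exact hstep.subset ih

lemma Reach.card (h : Reach G W S T) : T.card = S.card := by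
  induction h with
  | refl => rfl
  | tail _ hstep ih => rw [hstep.card, ih]

/-- Lift reachability in `W.erase v` to reachability in `W` with a frozen pebble at `v`. -/
lemma Reach.insert_frozen {v : V} (hv : v ∈ W) (h : Reach G (W.erase v) S T)
    (hS : S ⊆ W.erase v) : Reach G W (insert v S) (insert v T) := by
  induction h with
  | refl => exact Relation.ReflTransGen.refl
  | @tail S₁ S₂ hr hstep ih =>
    have hS₁ : S₁ ⊆ W.erase v := Reach.subset hr hS
    refine Relation.ReflTransGen.tail ih ?_
    obtain ⟨u, w, hu, hwW, hw, hadj, rfl⟩ := hstep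
    have huv : u ≠ v := (Finset.mem_erase.1 (hS₁ hu)).1
    have hwv : w ≠ v := (Finset.mem_erase.1 hwW).1
    refine ⟨u, w, Finset.mem_insert_of_mem hu, Finset.mem_of_mem_erase hwW, ?_, hadj, ?_⟩
    · simp only [Finset.mem_insert, not_or]
      exact ⟨hwv, hw⟩
    · ext x
      simp only [Finset.mem_insert, Finset.mem_erase]
      by_cases hxv : x = v <;> by_cases hxw : x = w <;> by_cases hxu : x = u <;>
        simp_all <;> tauto

/-- Along a walk staying in `W`, a pebble can be brought to the endpoint. -/
lemma bring {u w : V} (p : G.Walk u w) : ∀ S : Finset V, (∀ x ∈ p.support, x ∈ W) →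
    u ∈ S → ∃ S', Reach G W S S' ∧ w ∈ S' := by
  induction p with
  | nil => exact fun S _ hu => ⟨S, Relation.ReflTransGen.refl, hu⟩
  | @cons a x w hadj q ih =>
    intro S hsupp ha
    have hsuppq : ∀ y ∈ q.support, y ∈ W := fun y hy =>
      hsupp y (by rw [SimpleGraph.Walk.support_cons]; exact List.mem_cons_of_mem _ hy)
    by_cases hx : x ∈ S
    · exact ih S hsuppq hx
    · have hxW : x ∈ W := hsuppq x q.start_mem_support
      have hstep : StepS G W S (insert x (S.erase a)) := ⟨a, x, ha, hxW, hx, hadj, rfl⟩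
      obtain ⟨S', hr, hw⟩ := ih (insert x (S.erase a)) hsuppq (Finset.mem_insert_self _ _)
      exact ⟨S', Relation.ReflTransGen.head hstep hr, hw⟩

/-- Along a walk from a free vertex to `v` staying in `W`, the pebble at `v` can be cleared. -/
lemma vacate {f v : V} (p : G.Walk f v) : ∀ S : Finset V, (∀ x ∈ p.support, x ∈ W) →
    f ∉ S → v ∈ S → ∃ S', Reach G W S S' ∧ v ∉ S' := by
  induction p with
  | nil => exact fun S _ hf hv => absurd hv hf
  | @cons a x v hadj q ih =>
    intro S hsupp hf hv
    have hsuppq : ∀ y ∈ q.support, y ∈ W := fun y hy =>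
      hsupp y (by rw [SimpleGraph.Walk.support_cons]; exact List.mem_cons_of_mem _ hy)
    have haW : a ∈ W := hsupp a (by simp [SimpleGraph.Walk.support_cons])
    by_cases hx : x ∈ S
    · have hax : a ≠ x := fun h => hf (h ▸ hx)
      have hstep : StepS G W S (insert a (S.erase x)) := ⟨x, a, hx, haW, hf, hadj.symm, rfl⟩
      by_cases hxv : x = v
      · subst hxv
        refine ⟨insert a (S.erase x), Relation.ReflTransGen.single hstep, ?_⟩
        simp only [Finset.mem_insert, Finset.mem_erase]
        rintro (rfl | ⟨h, _⟩)
        · exact hf hx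
        · exact h rfl
      · have hxnot : x ∉ insert a (S.erase x) := by
          simp only [Finset.mem_insert, Finset.mem_erase]
          rintro (rfl | ⟨h, _⟩)
          · exact hax rfl
          · exact h rfl
        have hvmem : v ∈ insert a (S.erase x) := by
          by_cases hav : a = v
          · exact hav ▸ Finset.mem_insert_self _ _
          · exact Finset.mem_insert_of_mem (Finset.mem_erase.2 ⟨Ne.symm hxv, hv⟩)
        obtain ⟨S', hr, hout⟩ := ih _ hsuppq hxnot hvmem
        exact ⟨S', Relation.ReflTransGen.head hstep hr, hout⟩
    · exact ih S hsuppq hx hv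

/-- A connected vertex set with at least two vertices has a removable vertex. -/
lemma exists_removable (hconn : ConnOn G W) (h2 : 2 ≤ W.card) :
    ∃ v ∈ W, ConnOn G (W.erase v) := by
  obtain ⟨u₀, hu₀⟩ : W.Nonempty := Finset.card_pos.1 (by omega)
  -- distance within W from u₀
  set L : V → Set ℕ := fun x => {k | ∃ p : G.Walk u₀ x, (∀ y ∈ p.support, y ∈ W) ∧ p.length = k}
    with hL
  have hLne : ∀ x ∈ W, (L x).Nonempty := by
    intro x hx
    obtain ⟨p, hp⟩ := hconn u₀ hu₀ x hx
    exact ⟨p.length, p, hp, rfl⟩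
  set d : V → ℕ := fun x => sInf (L x) with hd
  have hdmem : ∀ x ∈ W, d x ∈ L x := fun x hx => Nat.sInf_mem (hLne x hx)
  have hdzero : ∀ x ∈ W, d x = 0 → x = u₀ := by
    intro x hx h0
    obtain ⟨p, _, hlen⟩ := hdmem x hx
    exact (p.eq_of_length_eq_zero (h0 ▸ hlen)).symm
  obtain ⟨v, hvW, hvmax⟩ := Finset.exists_max_image W d ⟨u₀, hu₀⟩
  obtain ⟨x₁, hx₁, hx₁u₀⟩ := Finset.exists_mem_ne h2 u₀
  have hdx₁ : 0 < d x₁ := Nat.pos_of_ne_zero (fun h => hx₁u₀ (hdzero x₁ hx₁ h))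
  have hvu₀ : v ≠ u₀ := by
    intro h
    have h1 : d x₁ ≤ d v := hvmax x₁ hx₁
    have h0 : d u₀ = 0 := Nat.sInf_eq_zero.2 (Or.inl ⟨SimpleGraph.Walk.nil, by simpa using hu₀, rfl⟩)
    rw [h] at h1
    omega
  -- minimal walks from u₀ avoid v
  have key : ∀ x ∈ W, x ≠ v → ∃ p : G.Walk u₀ x, ∀ y ∈ p.support, y ∈ W.erase v := by
    intro x hx hxv
    obtain ⟨p, hpsupp, hplen⟩ := hdmem x hx
    refine ⟨p, fun y hy => Finset.mem_erase.2 ⟨?_, hpsupp y hy⟩⟩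
    rintro rfl
    -- y lies on a minimal walk to x, contradiction with maximality of d y
    have htake := SimpleGraph.Walk.support_takeUntil_subset p hy
    have hdv : d y ≤ (p.takeUntil y hy).length :=
      Nat.sInf_le ⟨p.takeUntil y hy, fun z hz => hpsupp z (htake hz), rfl⟩
    have hsplit : (p.takeUntil y hy).length + (p.dropUntil y hy).length = p.length := by
      rw [← SimpleGraph.Walk.length_append, SimpleGraph.Walk.take_spec]
    have hdrop : 0 < (p.dropUntil y hy).length := by
      rcases Nat.eq_zero_or_pos (p.dropUntil y hy).length with h0 | h
      · exact absurd ((p.dropUntil y hy).eq_of_length_eq_zero h0) hxv.symm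
      · exact h
    have : d x ≤ d y := hvmax x hx
    omega
  refine ⟨v, hvW, ?_⟩
  intro a ha b hb
  have hav : a ≠ v := (Finset.mem_erase.1 ha).1
  have hbv : b ≠ v := (Finset.mem_erase.1 hb).1
  obtain ⟨pa, hpa⟩ := key a (Finset.mem_of_mem_erase ha) hav
  obtain ⟨pb, hpb⟩ := key b (Finset.mem_of_mem_erase hb) hbv
  refine ⟨pa.reverse.append pb, ?_⟩
  intro y hy
  rw [SimpleGraph.Walk.mem_support_append_iff] at hy
  rcases hy with hy | hy
  · exact hpa y (by rwa [SimpleGraph.Walk.support_reverse, List.mem_reverse] at hy)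
  · exact hpb y hy

lemma Reach.mono {W' : Finset V} (hWW : W' ⊆ W) (h : Reach G W' S T) : Reach G W S T := by
  induction h with
  | refl => exact .refl
  | tail _ hstep ih =>
    obtain ⟨u, w, hu, hwW, hw, hadj, rfl⟩ := hstep
    exact .tail ih ⟨u, w, hu, hWW hwW, hw, hadj, rfl⟩

theorem reach_main : ∀ (W : Finset V), ConnOn G W → ∀ S T : Finset V, S ⊆ W → T ⊆ W →
    S.card = T.card → Reach G W S T := by
  intro W
  induction W using Finset.strongInduction with
  | _ W ih =>
    intro hconn S T hSW hTW hcard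
    rcases T.eq_empty_or_nonempty with rfl | hTne
    · have : S = ∅ := Finset.card_eq_zero.1 (by simpa using hcard)
      subst this; exact .refl
    have hSne : S.Nonempty := Finset.card_pos.1 (by rw [hcard]; exact Finset.card_pos.2 hTne)
    by_cases hfull : W.card ≤ S.card
    · have hSW' : S = W := Finset.eq_of_subset_of_card_le hSW hfull
      have hTW' : T = W := Finset.eq_of_subset_of_card_le hTW (hcard ▸ hfull)
      rw [hSW', hTW']; exact .refl
    push_neg at hfull
    have h2 : 2 ≤ W.card := by
      have := Finset.card_pos.2 hSne; omega
    obtain ⟨v, hvW, hconn'⟩ := exists_removable hconn h2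
    by_cases hvT : v ∈ T
    · -- bring a pebble to v, freeze it there, and recurse
      obtain ⟨S₁, hr1, hvS₁⟩ : ∃ S₁, Reach G W S S₁ ∧ v ∈ S₁ := by
        by_cases hvS : v ∈ S
        · exact ⟨S, .refl, hvS⟩
        · obtain ⟨u, hu⟩ := hSne
          obtain ⟨p, hp⟩ := hconn u (hSW hu) v hvW
          exact bring p S hp hu
      have hS₁W : S₁ ⊆ W := hr1.subset hSW
      have hrec := ih (W.erase v) (Finset.erase_ssubset hvW) hconn' (S₁.erase v) (T.erase v)
        (Finset.erase_subset_erase v hS₁W) (Finset.erase_subset_erase v hTW)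
        (by rw [Finset.card_erase_of_mem hvS₁, Finset.card_erase_of_mem hvT, hr1.card, hcard])
      have hlift := hrec.insert_frozen hvW (fun x hx => Finset.mem_erase.2
        ⟨(Finset.mem_erase.1 hx).1, hS₁W (Finset.mem_of_mem_erase hx)⟩)
      rw [Finset.insert_erase hvS₁, Finset.insert_erase hvT] at hlift
      exact hr1.trans hlift
    · -- clear v, then recurse with v removed
      obtain ⟨S₂, hr2, hvS₂⟩ : ∃ S₂, Reach G W S S₂ ∧ v ∉ S₂ := by
        by_cases hvS : v ∈ S
        · obtain ⟨f, hfW, hfS⟩ : ∃ f ∈ W, f ∉ S := by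
            by_contra h
            push_neg at h
            have := Finset.card_le_card h
            omega
          obtain ⟨p, hp⟩ := hconn f hfW v hvW
          exact vacate p S hp hfS hvS
        · exact ⟨S, .refl, hvS⟩
      have hS₂W : S₂ ⊆ W := hr2.subset hSW
      have hrec := ih (W.erase v) (Finset.erase_ssubset hvW) hconn' S₂ T
        (fun x hx => Finset.mem_erase.2 ⟨fun h => hvS₂ (h ▸ hx), hS₂W hx⟩)
        (fun x hx => Finset.mem_erase.2 ⟨fun h => hvT (h ▸ hx), hTW hx⟩)
        (by rw [hr2.card, hcard])
      exact hr2.trans (hrec.mono (Finset.erase_subset v W))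

section Config

variable {n : ℕ}

/-- One agent moves along an edge to a currently unoccupied vertex; everyone else stays. -/
def CStep (G : SimpleGraph V) (c c' : Fin n → V) : Prop :=
  ∃ j, G.Adj (c j) (c' j) ∧ (∀ k, c' j ≠ c k) ∧ ∀ k, k ≠ j → c' k = c k

lemma CStep.injective {G : SimpleGraph V} {c c' : Fin n → V} (h : CStep G c c')
    (hc : Function.Injective c) : Function.Injective c' := by
  obtain ⟨j, _, hfree, hoth⟩ := h
  intro a b hab
  by_cases haj : a = j <;> by_cases hbj : b = j
  · rw [haj, hbj]
  · subst haj; exact absurd (hab.trans (hoth b hbj)) (hfree b)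
  · subst hbj; exact absurd (hab.symm.trans (hoth a haj)) (hfree a)
  · exact hc ((hoth a haj).symm.trans (hab.trans (hoth b hbj)))

lemma reach_lift {G : SimpleGraph V} {W S T : Finset V} (h : Reach G W S T) :
    ∀ c : Fin n → V, Function.Injective c → Finset.image c Finset.univ = S →
    ∃ c', Relation.ReflTransGen (CStep G) c c' ∧ Function.Injective c' ∧
      Finset.image c' Finset.univ = T := by
  induction h using Relation.ReflTransGen.head_induction_on with
  | refl => exact fun c hc himg => ⟨c, .refl, hc, himg⟩
  | head hstep _ ih =>
    intro c hc himg
    obtain ⟨u, w, hu, hwW, hw, hadj, rfl⟩ := hstep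
    obtain ⟨j, -, hj⟩ := Finset.mem_image.1 (himg ▸ hu)
    have hwim : ∀ k, c k ≠ w := by
      intro k hk
      exact hw (hk ▸ (himg ▸ Finset.mem_image_of_mem c (Finset.mem_univ k)))
    set c₁ := Function.update c j w with hc₁
    have hstep' : CStep G c c₁ := by
      refine ⟨j, ?_, ?_, ?_⟩
      · rw [hc₁, Function.update_self, hj]; exact hadj
      · intro k; rw [hc₁, Function.update_self]; exact fun hk => hwim k hk.symm
      · intro k hk; rw [hc₁, Function.update_of_ne hk]
    have hinj₁ : Function.Injective c₁ := hstep'.injective hc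
    have himg₁ : Finset.image c₁ Finset.univ = insert w ((Finset.image c Finset.univ).erase u) := by
      ext x
      simp only [Finset.mem_image, Finset.mem_insert, Finset.mem_erase, Finset.mem_univ,
        true_and]
      constructor
      · rintro ⟨k, rfl⟩
        by_cases hkj : k = j
        · subst hkj; rw [hc₁, Function.update_self]; exact Or.inl rfl
        · rw [hc₁, Function.update_of_ne hkj]
          refine Or.inr ⟨?_, ⟨k, rfl⟩⟩
          rw [← hj]; exact fun hcc => hkj (hc hcc)
      · rintro (rfl | ⟨hxu, k, rfl⟩)
        · exact ⟨j, by rw [hc₁, Function.update_self]⟩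
        · refine ⟨k, ?_⟩
          have hkj : k ≠ j := fun hkk => hxu (by rw [hkk, hj])
          rw [hc₁, Function.update_of_ne hkj]
    obtain ⟨c', hr, hinj', himg'⟩ := ih c₁ hinj₁ (by rw [himg₁, himg])
    exact ⟨c', .head hstep' hr, hinj', himg'⟩

end Config

end TAPFaux

/-- Anonymous MAPF (single team of all agents): on a connected graph, for any
distinct start vertices and equally many distinct targets, there exists an
assignment of agents to targets and collision-free paths realizing it. -/
theorem stmt0 {V : Type*} [Fintype V] (G : SimpleGraph V) (hG : G.Connected)
    (n : ℕ) (hcard : n ≤ Fintype.card V) (s g : Fin n ↪ V) :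
    ∃ (φ : Equiv.Perm (Fin n)) (l : Fin n → ℕ → V) (T : ℕ),
      (∀ j, l j 0 = s j) ∧
      (∀ j, ∀ t ≥ T, l j t = g (φ j)) ∧
      (∀ j t, l j t = l j (t + 1) ∨ G.Adj (l j t) (l j (t + 1))) ∧
      (∀ j j' t, j ≠ j' → l j t ≠ l j' t) ∧
      (∀ j j' t, j ≠ j' → ¬(l j t = l j' (t + 1) ∧ l j' t = l j (t + 1))) := by
  classical
  have hconn : TAPFaux.ConnOn G Finset.univ := fun u _ v _ =>
    ⟨(hG.preconnected u v).some, fun x _ => Finset.mem_univ x⟩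
  have hcards : (Finset.image (⇑s) Finset.univ).card = (Finset.image (⇑g) Finset.univ).card := by
    rw [Finset.card_image_of_injective _ s.injective, Finset.card_image_of_injective _ g.injective]
  have hreach := TAPFaux.reach_main Finset.univ hconn (Finset.image (⇑s) Finset.univ)
    (Finset.image (⇑g) Finset.univ) (Finset.subset_univ _) (Finset.subset_univ _) hcards
  obtain ⟨c', hchainR, hinj', himg'⟩ := TAPFaux.reach_lift hreach (⇑s) s.injective rfl
  -- the permutation
  have hex : ∀ j, ∃ i, g i = c' j := by
    intro j
    have : c' j ∈ Finset.image (⇑g) Finset.univ :=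
      himg' ▸ Finset.mem_image_of_mem c' (Finset.mem_univ j)
    simpa [Finset.mem_image] using this
  choose φ₀ hφ₀ using hex
  have hφinj : Function.Injective φ₀ := fun a b hab =>
    hinj' (by rw [← hφ₀ a, ← hφ₀ b, hab])
  let φ : Equiv.Perm (Fin n) := Equiv.ofBijective φ₀ (Finite.injective_iff_bijective.1 hφinj)
  have hφ : ∀ j, g (φ j) = c' j := hφ₀
  -- extract the chain of configurations
  obtain ⟨L, hchain, hlast⟩ := List.exists_isChain_cons_of_relationReflTransGen hchainR
  set M : List (Fin n → V) := (⇑s) :: L with hM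
  set m := L.length with hm
  set F : ℕ → (Fin n → V) := fun t => M.getD t c' with hF
  have hF0 : F 0 = ⇑s := rfl
  have hFge : ∀ t, m ≤ t → F t = c' := by
    intro t ht
    have hlen : M.length = m + 1 := by simp [hM, hm]
    by_cases hlt : t < M.length
    · have hidx : t = M.length - 1 := by omega
      subst hidx
      rw [hF]
      simp only
      rw [List.getD_eq_getElem _ _ hlt, ← List.getLast_eq_getElem (l := M) (by simp [hM])]
      exact hlast
    · rw [hF]
      simp only
      rw [List.getD_eq_default _ _ (by omega)]
  have hch' : M.Chain' (TAPFaux.CStep G) := hchain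
  have hstep : ∀ t, F t = F (t + 1) ∨ TAPFaux.CStep G (F t) (F (t + 1)) := by
    intro t
    by_cases ht : t < m
    · right
      have h1 : t < M.length := by simp [hM]; omega
      have h2 : t + 1 < M.length := by simp [hM]; omega
      have := List.isChain_iff_getElem.1 hch' t (by simp [hM]; omega)
      rw [hF]
      simp only
      rw [List.getD_eq_getElem _ _ h1, List.getD_eq_getElem _ _ h2]
      simpa [List.get_eq_getElem] using this
    · left
      rw [hFge t (by omega), hFge (t + 1) (by omega)]
  have hinjall : ∀ t, Function.Injective (F t) := by
    intro t
    induction t with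
    | zero => exact hF0 ▸ s.injective
    | succ t ih =>
      rcases hstep t with he | hs
      · exact he ▸ ih
      · exact hs.injective ih
  refine ⟨φ, fun j t => F t j, m, ?_, ?_, ?_, ?_, ?_⟩
  · intro j; show F 0 j = s j; rw [hF0]
  · intro j t ht; show F t j = g (φ j); rw [hFge t ht, hφ]
  · intro j t
    show F t j = F (t + 1) j ∨ G.Adj (F t j) (F (t + 1) j)
    rcases hstep t with he | ⟨j₀, hadj, hfree, hoth⟩
    · exact Or.inl (congrFun he j)
    · by_cases hj : j = j₀
      · subst hj; exact Or.inr hadj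
      · exact Or.inl (hoth j hj).symm
  · exact fun j j' t hne heq => hne (hinjall t heq)
  · rintro j j' t hne ⟨h1, h2⟩
    rcases hstep t with he | ⟨j₀, hadj, hfree, hoth⟩
    · exact hne (hinjall t (h1.trans (congrFun he j').symm))
    · by_cases hj : j = j₀
      · subst hj; exact hfree j' h2.symm
      · by_cases hj' : j' = j₀
        · subst hj'; exact hfree j h1.symm
        · exact hne (hinjall t (h1.trans (hoth j' hj')))
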